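/- Let $w_1,\dots,w_m \in \mathbb{R}^d$ be unit vectors with incoherence $\mu$, let $S$ have size $k$, let $a$ be supported on $S$ with $|a_i| \ge \alpha$ for $i \in S$ and $|a_i| \le A$ for all $i$ (where $A \ge \alpha$), and set $h = \sum_{i\in S} a_i w_i + \varepsilon$ with $\|\varepsilon\|_2 \le \sigma$. If the threshold $\tau$ satisfies $k\mu A + \sigma < \tau < \alpha - (k-1)\mu A - \sigma$, then the thresholded support $S^\star(h) := \{j : |\langle h, w_j\rangle| > \tau\}$ equals $S$ exactly. -/
import Mathlib


open RealInnerProductSpace Finset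

theorem stmt2 {d m k : ℕ} (w : Fin m → EuclideanSpace ℝ (Fin d))
    (hunit : ∀ i, ‖w i‖ = 1) (μ : ℝ)
    (hincoh : ∀ i j, i ≠ j → |⟪w i, w j⟫| ≤ μ)
    (S : Finset (Fin m)) (hS : S.card = k)
    (a : Fin m → ℝ) (α A : ℝ) (hαA : α ≤ A)
    (hsupp : ∀ i ∉ S, a i = 0)
    (hlow : ∀ i ∈ S, α ≤ |a i|) (hup : ∀ i, |a i| ≤ A)
    (ε h : EuclideanSpace ℝ (Fin d)) (σ : ℝ) (hε : ‖ε‖ ≤ σ)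
    (hh : h = (∑ i ∈ S, a i • w i) + ε)
    (τ : ℝ) (hτ₁ : (k : ℝ) * μ * A + σ < τ)
    (hτ₂ : τ < α - ((k : ℝ) - 1) * μ * A - σ) :
    ∀ j, |⟪h, w j⟫| > τ ↔ j ∈ S := by
  intro j
  have hA0 : 0 ≤ A := le_trans (abs_nonneg _) (hup j)
  have hinner : ⟪h, w j⟫ = (∑ i ∈ S, a i * ⟪w i, w j⟫) + ⟪ε, w j⟫ := by
    rw [hh, inner_add_left, sum_inner]
    simp [real_inner_smul_left, Finset.mul_sum, mul_assoc]
  have hεj : |⟪ε, w j⟫| ≤ σ := by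
    calc |⟪ε, w j⟫| ≤ ‖ε‖ * ‖w j‖ := abs_real_inner_le_norm _ _
      _ ≤ σ := by rw [hunit]; simpa using hε
  constructor
  · intro hgt
    by_contra hjS
    have hterm : ∀ i ∈ S, |a i * ⟪w i, w j⟫| ≤ μ * A := by
      intro i hi
      have hij : i ≠ j := fun e => hjS (e ▸ hi)
      rw [abs_mul, mul_comm]
      exact mul_le_mul (hincoh i j hij) (hup i)
        (abs_nonneg _) ((abs_nonneg _).trans (hincoh i j hij))
    have hsum : |∑ i ∈ S, a i * ⟪w i, w j⟫| ≤ (k : ℝ) * μ * A := by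
      calc |∑ i ∈ S, a i * ⟪w i, w j⟫| ≤ ∑ i ∈ S, |a i * ⟪w i, w j⟫| :=
            Finset.abs_sum_le_sum_abs _ _
        _ ≤ ∑ _i ∈ S, μ * A := Finset.sum_le_sum hterm
        _ = (k : ℝ) * μ * A := by rw [Finset.sum_const, hS]; push_cast; ring
    have : |⟪h, w j⟫| ≤ (k : ℝ) * μ * A + σ := by
      rw [hinner]
      exact (abs_add_le _ _).trans (add_le_add hsum hεj)
    linarith
  · intro hjS
    have hk1 : 1 ≤ k := by
      rw [← hS]; exact Finset.card_pos.mpr ⟨j, hjS⟩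
    have hsplit : (∑ i ∈ S, a i * ⟪w i, w j⟫)
        = a j + ∑ i ∈ S.erase j, a i * ⟪w i, w j⟫ := by
      rw [← Finset.add_sum_erase _ _ hjS]
      congr 1
      have : ⟪w j, w j⟫ = (1:ℝ) := by
        rw [real_inner_self_eq_norm_sq, hunit]; norm_num
      rw [this, mul_one]
    have hterm : ∀ i ∈ S.erase j, |a i * ⟪w i, w j⟫| ≤ μ * A := by
      intro i hi
      have hij : i ≠ j := Finset.ne_of_mem_erase hi
      rw [abs_mul, mul_comm]
      exact mul_le_mul (hincoh i j hij) (hup i)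
        (abs_nonneg _) ((abs_nonneg _).trans (hincoh i j hij))
    have hsum : |∑ i ∈ S.erase j, a i * ⟪w i, w j⟫| ≤ ((k : ℝ) - 1) * μ * A := by
      calc |∑ i ∈ S.erase j, a i * ⟪w i, w j⟫|
          ≤ ∑ i ∈ S.erase j, |a i * ⟪w i, w j⟫| := Finset.abs_sum_le_sum_abs _ _
        _ ≤ ∑ _i ∈ S.erase j, μ * A := Finset.sum_le_sum hterm
        _ = ((k : ℝ) - 1) * μ * A := by
            rw [Finset.sum_const, Finset.card_erase_of_mem hjS, hS]
            rw [nsmul_eq_mul, Nat.cast_sub hk1]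
            push_cast; ring
    have hineq : α - ((k : ℝ) - 1) * μ * A - σ ≤ |⟪h, w j⟫| := by
      have : |a j| - |∑ i ∈ S.erase j, a i * ⟪w i, w j⟫| - |⟪ε, w j⟫|
          ≤ |⟪h, w j⟫| := by
        rw [hinner, hsplit]
        have h1 : |a j| - |(∑ i ∈ S.erase j, a i * ⟪w i, w j⟫) + ⟪ε, w j⟫|
            ≤ |a j + ((∑ i ∈ S.erase j, a i * ⟪w i, w j⟫) + ⟪ε, w j⟫)| := by
          have := abs_sub_abs_le_abs_sub (a j) (-((∑ i ∈ S.erase j, a i * ⟪w i, w j⟫) + ⟪ε, w j⟫))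
          rw [abs_neg, sub_neg_eq_add] at this
          exact this
        have h2 := abs_add_le (∑ i ∈ S.erase j, a i * ⟪w i, w j⟫) ⟪ε, w j⟫
        rw [add_assoc]
        linarith
      have := hlow j hjS
      linarith
    linarith
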